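/- arXiv:0706.1526 — 2 statements merged into one kernel-verified Lean document; each statement's English description precedes it below -/
import Mathlib

section
/- Let G be a finite outerplanar simple graph with maximum degree Δ ≥ 6. Then every clique of G² with Δ + 1 vertices is the closed neighborhood of some vertex of G: if S is a set of Δ + 1 vertices that are pairwise adjacent in G², then there is a vertex v of G with degree Δ such that S = {v} ∪ N_G(v). -/
open SimpleGraph

/-- The square `G²` of a simple graph `G`: two distinct vertices are adjacent iff
they are adjacent in `G` or have a common neighbor in `G`. -/
def SimpleGraph.square {V : Type*} (G : SimpleGraph V) : SimpleGraph V where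
  Adj u v := u ≠ v ∧ (G.Adj u v ∨ ∃ w, G.Adj u w ∧ G.Adj w v)
  symm := ⟨by
    rintro u v ⟨hne, h | ⟨w, h1, h2⟩⟩
    · exact ⟨hne.symm, Or.inl h.symm⟩
    · exact ⟨hne.symm, Or.inr ⟨w, h2.symm, h1.symm⟩⟩⟩
  loopless := ⟨fun u h => h.1 rfl⟩

/-- A finite simple graph is outerplanar iff it has a one-page book embedding:
a linear order (here realized by an injection into `ℕ`) on its vertices such that
no two edges "cross", i.e. there are no vertices `a < c < b < d` with both
`{a,b}` and `{c,d}` edges. -/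
def SimpleGraph.IsOuterplanar {V : Type*} (G : SimpleGraph V) : Prop :=
  ∃ f : V → ℕ, Function.Injective f ∧
    ∀ a b c d : V, G.Adj a b → G.Adj c d →
      ¬(f a < f c ∧ f c < f b ∧ f b < f d)

/-- The degree of a vertex, as the cardinality of its neighbor set. -/
noncomputable def SimpleGraph.deg {V : Type*} (G : SimpleGraph V) (v : V) : ℕ :=
  (G.neighborSet v).ncard

/-- The maximum degree `Δ` of a finite graph. -/
noncomputable def SimpleGraph.maxDeg {V : Type*} [Fintype V] (G : SimpleGraph V) : ℕ :=
  Finset.univ.sup fun v => G.deg v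

/-- The degree of `v` inside the subgraph of `G` induced by the vertex set `s`. -/
noncomputable def SimpleGraph.degIn {V : Type*} (G : SimpleGraph V) (s : Finset V) (v : V) : ℕ :=
  {u | u ∈ s ∧ G.Adj v u}.ncard

/-- The inductiveness (degeneracy) of a finite graph: the maximum over all nonempty
induced subgraphs of the minimum degree of the induced subgraph. -/
noncomputable def SimpleGraph.inductiveness {V : Type*} [Fintype V]
    (G : SimpleGraph V) : ℕ :=
  Finset.univ.powerset.sup fun s =>
    if h : s.Nonempty then s.inf' h (G.degIn s) else 0

/-- A graph is chordal if every cycle of length at least 4 has a chord: two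
vertices of the cycle, adjacent in the graph, whose joining edge is not an edge
of the cycle (i.e. they are nonconsecutive on the cycle). -/
def SimpleGraph.IsChordal {V : Type*} (G : SimpleGraph V) : Prop :=
  ∀ ⦃v : V⦄ (w : G.Walk v v), w.IsCycle → 4 ≤ w.length →
    ∃ a b : V, a ∈ w.support ∧ b ∈ w.support ∧ G.Adj a b ∧ s(a, b) ∉ w.edges

/-- A finite graph is biconnected if it has at least 3 vertices, is connected,
and deleting any single vertex leaves it connected. -/
def SimpleGraph.Biconnected {V : Type*} [Fintype V] (G : SimpleGraph V) : Prop :=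
  3 ≤ Fintype.card V ∧ G.Connected ∧
    ∀ v : V, ((G.induce {u | u ≠ v}).Connected)

/-- `G` is `k`-choosable: for every assignment of lists of exactly `k` colors to
the vertices there is a proper coloring choosing each vertex's color from its list. -/
def SimpleGraph.Choosable {V : Type*} (G : SimpleGraph V) (k : ℕ) : Prop :=
  ∀ L : V → Finset ℕ, (∀ v, (L v).card = k) →
    ∃ c : V → ℕ, (∀ v, c v ∈ L v) ∧ ∀ u v, G.Adj u v → c u ≠ c v

/-- `F₄`: the 6-vertex graph obtained from the triangle `0 1 2` by adding, for each
edge of the triangle, a new vertex (`3 = y₀₁`, `4 = y₁₂`, `5 = y₀₂`) adjacent to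
exactly the two endpoints of that edge. -/
def F4 : SimpleGraph (Fin 6) :=
  SimpleGraph.fromEdgeSet
    {s(0, 1), s(1, 2), s(0, 2), s(3, 0), s(3, 1), s(4, 1), s(4, 2), s(5, 0), s(5, 2)}

/-- `F₆`: the 12-vertex graph obtained from `F₄` by adding, for each of the six edges
`xᵢyᵢⱼ` between a triangle vertex and an added vertex, a new vertex adjacent to
exactly the two endpoints of that edge (vertices `6,…,11`). -/
def F6 : SimpleGraph (Fin 12) :=
  SimpleGraph.fromEdgeSet
    {s(0, 1), s(1, 2), s(0, 2), s(3, 0), s(3, 1), s(4, 1), s(4, 2), s(5, 0), s(5, 2),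
     s(6, 0), s(6, 3), s(7, 1), s(7, 3), s(8, 1), s(8, 4), s(9, 2), s(9, 4),
     s(10, 0), s(10, 5), s(11, 2), s(11, 5)}

/-- The rigid ladder `RL n`.  For even `n = 2k` it has vertices `u₁,…,u_k,v₁,…,v_k`
and edges `uᵢvᵢ, uᵢuᵢ₊₁, uᵢvᵢ₊₁, vᵢvᵢ₊₁` (for `1 ≤ i ≤ k-1`) together with `u_k v_k`;
for odd `n` it is `RL (n+1)` with the vertex `u_{(n+1)/2}` deleted.  We use the zigzag
labelling `vᵢ ↦ 2i - 2`, `uᵢ ↦ 2i - 1` (under which deleting `u_{(n+1)/2} = n` from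
`RL (n+1)` leaves exactly the labels `0,…,n-1`); under this labelling two vertices are
adjacent iff their labels differ by exactly 1 or 2. -/
def rigidLadder (n : ℕ) : SimpleGraph (Fin n) where
  Adj a b := a ≠ b ∧ Nat.dist a.val b.val ≤ 2
  symm := ⟨by
    rintro a b ⟨h1, h2⟩
    exact ⟨h1.symm, by rwa [Nat.dist_comm]⟩⟩
  loopless := ⟨fun a h => h.1 rfl⟩



open SimpleGraph

section Hub

variable {V : Type*} {G : SimpleGraph V}

/-- Distance-at-most-2 connectivity. -/
def Conn (G : SimpleGraph V) (x y : V) : Prop :=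
  G.Adj x y ∨ ∃ w, G.Adj x w ∧ G.Adj w y

variable {α : Type*} [LinearOrder α]

/-- Noncrossing hypothesis, in "cross" form. -/
def NCross (G : SimpleGraph V) (f : V → α) : Prop :=
  ∀ ⦃a b c d : V⦄, G.Adj a b → G.Adj c d → f a < f c → f c < f b → f b < f d → False

lemma NCross.dual {f : V → α} (hx : NCross G f) :
    NCross G (fun v => OrderDual.toDual (f v)) := by
  intro a b c d hab hcd h1 h2 h3
  exact hx hcd.symm hab.symm h3 h2 h1

lemma trap {f : V → α} (hx : NCross G f) {p q x y : V}
    (hpq : G.Adj p q) (h1 : f p < f x) (h2 : f x < f q)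
    (hxy : G.Adj x y) : f p ≤ f y ∧ f y ≤ f q := by
  constructor
  · by_contra h
    push_neg at h
    exact hx hxy.symm hpq h h1 h2
  · by_contra h
    push_neg at h
    exact hx hpq hxy h1 h2 h

lemma hubW {f : V → α} (hx : NCross G f) (hinj : Function.Injective f) {p q x y : V}
    (hpq : G.Adj p q) (h1 : f p < f x) (h2 : f x < f q)
    (hy : f y < f p ∨ f q < f y) (hc : Conn G x y) :
    (G.Adj x p ∧ G.Adj p y) ∨ (G.Adj x q ∧ G.Adj q y) := by
  rcases hc with h | ⟨w, hxw, hwy⟩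
  · rcases trap hx hpq h1 h2 h with ⟨ha, hb⟩
    rcases hy with hy | hy
    · exact absurd ha (not_le.mpr hy)
    · exact absurd hb (not_le.mpr hy)
  · obtain ⟨hpw, hwq⟩ := trap hx hpq h1 h2 hxw
    rcases eq_or_lt_of_le hpw with he | hlt
    · left
      have hwp : w = p := hinj he.symm
      subst hwp
      exact ⟨hxw, hwy⟩
    · rcases eq_or_lt_of_le hwq with he | hlt2
      · right
        have hwq' : w = q := hinj he
        subst hwq'
        exact ⟨hxw, hwy⟩
      · rcases trap hx hpq hlt hlt2 hwy with ⟨ha, hb⟩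
        rcases hy with hy | hy
        · exact absurd ha (not_le.mpr hy)
        · exact absurd hb (not_le.mpr hy)

lemma killK {f : V → α} (hx : NCross G f) (hinj : Function.Injective f)
    {a b qv y r1 r2 : V}
    (hab : G.Adj a b) (hqr2 : G.Adj qv r2) (hnyq : ¬ G.Adj y qv)
    (h1 : f a < f y) (h2 : f y < f b) (h3 : f b ≤ f qv) (h4 : f qv < f r1)
    (h5 : f r1 < f r2) (hc : Conn G y r1) : False := by
  rcases hc with h | ⟨w, hyw, hwr⟩
  · exact hx hab h h1 h2 (lt_of_le_of_lt h3 h4)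
  · rcases lt_trichotomy (f w) (f qv) with hw | hw | hw
    · exact hx hwr hqr2 hw h4 h5
    · exact hnyq ((hinj hw) ▸ hyw)
    · exact hx hab hyw h1 h2 (lt_of_le_of_lt h3 hw)

lemma two_sorted {f : V → α} (hinj : Function.Injective f) {T : Finset V}
    (h2 : 2 ≤ T.card) : ∃ a ∈ T, ∃ b ∈ T, f a < f b := by
  have h2' : 1 < T.card := by omega
  obtain ⟨a, ha, b, hb, hne⟩ := Finset.one_lt_card.mp h2'
  rcases lt_trichotomy (f a) (f b) with h | h | h
  · exact ⟨a, ha, b, hb, h⟩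
  · exact absurd (hinj h) hne
  · exact ⟨b, hb, a, ha, h⟩

lemma three_sorted {f : V → α} (hinj : Function.Injective f) {T : Finset V}
    (h3 : 3 ≤ T.card) :
    ∃ a ∈ T, ∃ b ∈ T, ∃ c ∈ T, f a < f b ∧ f b < f c := by
  have h3' : 2 < T.card := by omega
  obtain ⟨a, ha, b, hb, c, hc, hab, hac, hbc⟩ := Finset.two_lt_card.mp h3'
  have fab : f a ≠ f b := fun h => hab (hinj h)
  have fac : f a ≠ f c := fun h => hac (hinj h)
  have fbc : f b ≠ f c := fun h => hbc (hinj h)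
  rcases fab.lt_or_gt with h1 | h1
  · rcases fbc.lt_or_gt with h2 | h2
    · exact ⟨a, ha, b, hb, c, hc, h1, h2⟩
    · rcases fac.lt_or_gt with h4 | h4
      · exact ⟨a, ha, c, hc, b, hb, h4, h2⟩
      · exact ⟨c, hc, a, ha, b, hb, h4, h1⟩
  · rcases fac.lt_or_gt with h4 | h4
    · exact ⟨b, hb, a, ha, c, hc, h1, h4⟩
    · rcases fbc.lt_or_gt with h2 | h2
      · exact ⟨b, hb, c, hc, a, ha, h2, h4⟩
      · exact ⟨c, hc, b, hb, a, ha, h2, h1⟩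

lemma innermost [Fintype V] {f : V → α} (hx : NCross G f) (hinj : Function.Injective f) {m : V}
    (hex : ∃ a b, G.Adj a b ∧ f a < f m ∧ f m < f b) :
    ∃ p q, G.Adj p q ∧ f p < f m ∧ f m < f q ∧
      ∀ a b, G.Adj a b → f a < f m → f m < f b → f a ≤ f p ∧ f q ≤ f b := by
  classical
  obtain ⟨a0, b0, hab0, ha0, hb0⟩ := hex
  set P : Finset V := Finset.univ.filter (fun v => ∃ b, G.Adj v b ∧ f v < f m ∧ f m < f b) with hP
  have ha0P : a0 ∈ P := by
    simp only [hP, Finset.mem_filter, Finset.mem_univ, true_and]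
    exact ⟨b0, hab0, ha0, hb0⟩
  obtain ⟨p, hpP, hpmax⟩ := Finset.exists_max_image P f ⟨a0, ha0P⟩
  simp only [hP, Finset.mem_filter, Finset.mem_univ, true_and] at hpP
  obtain ⟨b1, hpb1, hpm, hb1⟩ := hpP
  set Q : Finset V := Finset.univ.filter (fun v => G.Adj p v ∧ f m < f v) with hQ
  have hb1Q : b1 ∈ Q := by
    simp only [hQ, Finset.mem_filter, Finset.mem_univ, true_and]
    exact ⟨hpb1, hb1⟩
  obtain ⟨q, hqQ, hqmin⟩ := Finset.exists_min_image Q f ⟨b1, hb1Q⟩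
  simp only [hQ, Finset.mem_filter, Finset.mem_univ, true_and] at hqQ
  obtain ⟨hpq, hmq⟩ := hqQ
  refine ⟨p, q, hpq, hpm, hmq, ?_⟩
  intro a b hab ham hmb
  have haP : a ∈ P := by
    simp only [hP, Finset.mem_filter, Finset.mem_univ, true_and]
    exact ⟨b, hab, ham, hmb⟩
  have hap : f a ≤ f p := hpmax a haP
  refine ⟨hap, ?_⟩
  by_contra hbq
  push_neg at hbq
  rcases eq_or_lt_of_le hap with he | hlt
  · have : a = p := hinj he
    subst this
    have hbQ : b ∈ Q := by
      simp only [hQ, Finset.mem_filter, Finset.mem_univ, true_and]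
      exact ⟨hab, hmb⟩
    exact absurd (hqmin b hbQ) (not_le.mpr hbq)
  · exact hx hab hpq hlt (lt_trans hpm hmb) hbq

end Hub

section Hub2

variable {V : Type*} {G : SimpleGraph V} {α : Type*} [LinearOrder α]

/-- Case II.a, `Out = ∅`: the middle vertex is adjacent to `p` when `p ∈ S`. -/
lemma IIa_mp {f : V → α} (hx : NCross G f) (hinj : Function.Injective f)
    {p q m : V} (hpq : G.Adj p q) (hpm : f p < f m) (hmq : f m < f q)
    (hinner : ∀ a b, G.Adj a b → f a < f m → f m < f b → f a ≤ f p ∧ f q ≤ f b)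
    {S : Finset V} (hcard : 7 ≤ S.card)
    (hconn : ∀ x ∈ S, ∀ y ∈ S, x ≠ y → Conn G x y)
    (hm : m ∈ S) (hp : p ∈ S)
    (hnoout : ∀ s ∈ S, f p ≤ f s ∧ f s ≤ f q)
    (hILne : ∃ x ∈ S, f p < f x ∧ f x < f m)
    (hIRne : ∃ y ∈ S, f m < f y ∧ f y < f q) :
    G.Adj m p := by
  classical
  by_contra hmp
  obtain ⟨x0, hx0S, hx0p, hx0m⟩ := hILne
  obtain ⟨y0, hy0S, hy0m, hy0q⟩ := hIRne
  -- every element of IR is adjacent to q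
  have haq : ∀ y ∈ S, f m < f y → f y < f q → G.Adj q y := by
    intro y hyS hmy hyq
    have hne : p ≠ y := fun h => absurd (h ▸ (lt_trans hpm hmy)) (lt_irrefl _)
    rcases hconn p hp y hyS hne with h | ⟨w, hpw, hwy⟩
    · exact absurd (hinner p y h hpm hmy).2 (not_le.mpr hyq)
    · rcases lt_trichotomy (f w) (f m) with hw | hw | hw
      · exact absurd (hinner w y hwy hw hmy).2 (not_le.mpr hyq)
      · exact absurd ((hinj hw) ▸ hpw : G.Adj p m) (fun h => hmp h.symm)
      · have h1 := (hinner p w hpw hpm hw).2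
        rcases eq_or_lt_of_le h1 with he | hlt
        · exact (hinj he) ▸ hwy
        · have h2 := (trap hx hpq (lt_trans hpm hmy) hyq hwy.symm).2
          exact absurd h2 (not_le.mpr hlt)
  -- every element of IR is adjacent to m
  have hmIR : ∀ y ∈ S, f m < f y → f y < f q → G.Adj m y := by
    intro y hyS hmy hyq
    have hne : x0 ≠ y := fun h => absurd (h ▸ (lt_trans hx0m hmy)) (lt_irrefl _)
    rcases hconn x0 hx0S y hyS hne with h | ⟨w, hxw, hwy⟩
    · exact absurd (hinner x0 y h hx0m hmy).1 (not_le.mpr hx0p)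
    · rcases lt_trichotomy (f w) (f m) with hw | hw | hw
      · exact absurd (hinner w y hwy hw hmy).2 (not_le.mpr hyq)
      · exact (hinj hw) ▸ hwy
      · exact absurd (hinner x0 w hxw hx0m hw).1 (not_le.mpr hx0p)
  -- every element of IL is adjacent to m
  have hmIL : ∀ x ∈ S, f p < f x → f x < f m → G.Adj x m := by
    intro x hxS hpx hxm
    have hne : x ≠ y0 := fun h => absurd (h ▸ (lt_trans hxm hy0m)) (lt_irrefl _)
    rcases hconn x hxS y0 hy0S hne with h | ⟨w, hxw, hwy⟩
    · exact absurd (hinner x y0 h hxm hy0m).1 (not_le.mpr hpx)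
    · rcases lt_trichotomy (f w) (f m) with hw | hw | hw
      · exact absurd (hinner w y0 hwy hw hy0m).2 (not_le.mpr hy0q)
      · exact (hinj hw) ▸ hxw
      · exact absurd (hinner x w hxw hxm hw).1 (not_le.mpr hpx)
  set IR := S.filter (fun s => f m < f s ∧ f s < f q) with hIRdef
  set IL := S.filter (fun s => f p < f s ∧ f s < f m) with hILdef
  have hIR1 : IR.card ≤ 1 := by
    rw [Finset.card_le_one]
    intro y1 hy1 y2 hy2
    rw [hIRdef, Finset.mem_filter] at hy1 hy2
    by_contra hne
    have hfne : f y1 ≠ f y2 := fun h => hne (hinj h)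
    rcases hfne.lt_or_gt with h | h
    · exact hx (hmIR y2 hy2.1 hy2.2.1 hy2.2.2) (haq y1 hy1.1 hy1.2.1 hy1.2.2).symm
        hy1.2.1 h hy2.2.2
    · exact hx (hmIR y1 hy1.1 hy1.2.1 hy1.2.2) (haq y2 hy2.1 hy2.2.1 hy2.2.2).symm
        hy2.2.1 h hy1.2.2
  have hsub : S ⊆ IL ∪ IR ∪ {p, q, m} := by
    intro s hs
    obtain ⟨h1, h2⟩ := hnoout s hs
    simp only [Finset.mem_union, Finset.mem_insert, Finset.mem_singleton, hILdef, hIRdef,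
      Finset.mem_filter]
    rcases eq_or_lt_of_le h1 with he | h1
    · exact Or.inr (Or.inl (hinj he.symm))
    rcases eq_or_lt_of_le h2 with he | h2
    · exact Or.inr (Or.inr (Or.inl (hinj he)))
    rcases lt_trichotomy (f s) (f m) with h3 | h3 | h3
    · exact Or.inl (Or.inl ⟨hs, h1, h3⟩)
    · exact Or.inr (Or.inr (Or.inr (hinj h3)))
    · exact Or.inl (Or.inr ⟨hs, h3, h2⟩)
  have hIL3 : 3 ≤ IL.card := by
    have hc1 := Finset.card_le_card hsub
    have hc2 := Finset.card_union_le (IL ∪ IR) ({p, q, m} : Finset V)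
    have hc3 := Finset.card_union_le IL IR
    have hc4 : ({p, q, m} : Finset V).card ≤ 3 := by
      apply le_trans (Finset.card_insert_le _ _)
      have := Finset.card_insert_le q ({m} : Finset V)
      simp only [Finset.card_singleton] at this ⊢
      omega
    omega
  obtain ⟨x1, hx1, x2, hx2, x3, hx3, h12, h23⟩ := three_sorted hinj hIL3
  rw [hILdef, Finset.mem_filter] at hx1 hx2 hx3
  obtain ⟨hx1S, hpx1, hx1m⟩ := hx1
  obtain ⟨hx2S, hpx2, hx2m⟩ := hx2
  obtain ⟨hx3S, hpx3, hx3m⟩ := hx3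
  -- final exhaustion : the pair (p, x3) has no connection
  have hne : p ≠ x3 := fun h => absurd (h ▸ hpx3) (lt_irrefl _)
  have hx3q : f x3 < f q := lt_trans hx3m hmq
  rcases hconn p hp x3 hx3S hne with h | ⟨w, hpw, hwx3⟩
  · exact hx h (hmIL x1 hx1S hpx1 hx1m) hpx1 (lt_trans h12 h23) hx3m
  · have hfpw : f p ≤ f w := (trap hx hpq hpx3 hx3q hwx3.symm).1
    have hwp : w ≠ p := fun h => G.loopless.irrefl p (h ▸ hpw)
    have hfpw' : f p < f w := lt_of_le_of_ne hfpw (fun h => hwp (hinj h.symm))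
    rcases lt_trichotomy (f w) (f m) with hw | hw | hw
    · rcases lt_trichotomy (f w) (f x3) with hv | hv | hv
      · rcases lt_trichotomy (f w) (f x2) with hu | hu | hu
        · exact hx hwx3 (hmIL x2 hx2S hpx2 hx2m) hu h23 hx3m
        · exact hx ((hinj hu) ▸ hpw : G.Adj p x2) (hmIL x1 hx1S hpx1 hx1m) hpx1 h12 hx2m
        · exact hx hpw (hmIL x2 hx2S hpx2 hx2m) hpx2 hu hw
      · exact G.loopless.irrefl x3 ((hinj hv) ▸ hwx3)
      · exact hx hpw (hmIL x3 hx3S hpx3 hx3m) hpx3 hv hw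
    · exact hmp (((hinj hw) ▸ hpw : G.Adj p m)).symm
    · have h1 := (hinner p w hpw hpm hw).2
      rcases eq_or_lt_of_le h1 with he | hlt
      · exact absurd (hinner x3 q ((hinj he) ▸ hwx3 : G.Adj q x3).symm hx3m hmq).1
          (not_le.mpr hpx3)
      · exact absurd (trap hx hpq hpx3 hx3q hwx3.symm).2 (not_le.mpr hlt)

end Hub2

section Hub3

variable {V : Type*} {G : SimpleGraph V} {α : Type*} [LinearOrder α]

/-- Case II.b.1: `IR = ∅`, `IL ≠ ∅` — `p` is a hub. -/
lemma IIb1 {f : V → α} (hx : NCross G f) (hinj : Function.Injective f)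
    {p q m : V} (hpq : G.Adj p q) (hpm : f p < f m) (hmq : f m < f q)
    (hinner : ∀ a b, G.Adj a b → f a < f m → f m < f b → f a ≤ f p ∧ f q ≤ f b)
    {S : Finset V}
    (hconn : ∀ x ∈ S, ∀ y ∈ S, x ≠ y → Conn G x y)
    (hm : m ∈ S)
    (hIRe : ∀ s ∈ S, ¬(f m < f s ∧ f s < f q))
    (hILne : ∃ x ∈ S, f p < f x ∧ f x < f m)
    (hR3 : 3 ≤ (S.filter (fun s => f m < f s)).card) :
    ∀ s ∈ S, s ≠ p → G.Adj p s := by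
  classical
  obtain ⟨x0, hx0S, hx0p, hx0m⟩ := hILne
  -- two elements beyond q
  have hOR2 : 2 ≤ (S.filter (fun s => f q < f s)).card := by
    have hsub : S.filter (fun s => f m < f s) ⊆ insert q (S.filter (fun s => f q < f s)) := by
      intro s hs
      rw [Finset.mem_filter] at hs
      rcases lt_trichotomy (f s) (f q) with h | h | h
      · exact absurd ⟨hs.2, h⟩ (hIRe s hs.1)
      · simp [hinj h]
      · simp [Finset.mem_filter, hs.1, h]
    have := Finset.card_le_card hsub
    have := Finset.card_insert_le q (S.filter (fun s => f q < f s))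
    omega
  obtain ⟨o1, ho1, o2, ho2, ho12⟩ := two_sorted hinj hOR2
  rw [Finset.mem_filter] at ho1 ho2
  -- every element of IL and every out-element is adjacent to p
  have hILp : ∀ x ∈ S, f p < f x → f x < f m → G.Adj x p := by
    intro x hxS hpx hxm
    have hne : x ≠ o1 := fun h => absurd (h ▸ (lt_trans hxm (lt_trans hmq ho1.2)))
      (lt_irrefl _)
    rcases hubW hx hinj hpq hpx (lt_trans hxm hmq) (Or.inr ho1.2)
        (hconn x hxS o1 ho1.1 hne) with h | h
    · exact h.1
    · exact absurd (hinner x q h.1 hxm hmq).1 (not_le.mpr hpx)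
  have hPout : ∀ o ∈ S, (f o < f p ∨ f q < f o) → G.Adj p o := by
    intro o hoS hor
    have hne : x0 ≠ o := by
      intro h
      subst h
      rcases hor with h | h
      · exact absurd (lt_trans h hx0p) (lt_irrefl _)
      · exact absurd (lt_trans (lt_trans hx0m hmq) h) (lt_irrefl _)
    rcases hubW hx hinj hpq hx0p (lt_trans hx0m hmq) hor
        (hconn x0 hx0S o hoS hne) with h | h
    · exact h.2
    · exact absurd (hinner x0 q h.1 hx0m hmq).1 (not_le.mpr hx0p)
  -- m is adjacent to p
  have hmp : G.Adj m p := by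
    by_contra hmp
    have hne : m ≠ o2 := fun h => absurd (h ▸ (lt_trans hmq ho2.2)) (lt_irrefl _)
    rcases hubW hx hinj hpq hpm hmq (Or.inr ho2.2) (hconn m hm o2 ho2.1 hne) with h | h
    · exact hmp h.1
    · exact hx (hPout o1 ho1.1 (Or.inr ho1.2)) h.2 (lt_trans hpm hmq) ho1.2 ho12
  -- conclusion
  intro s hsS hsp
  rcases lt_trichotomy (f s) (f p) with h1 | h1 | h1
  · exact hPout s hsS (Or.inl h1)
  · exact absurd (hinj h1) hsp
  rcases lt_trichotomy (f s) (f m) with h2 | h2 | h2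
  · exact (hILp s hsS h1 h2).symm
  · have : s = m := hinj h2
    subst this
    exact hmp.symm
  rcases lt_trichotomy (f s) (f q) with h3 | h3 | h3
  · exact absurd ⟨h2, h3⟩ (hIRe s hsS)
  · have : s = q := hinj h3
    subst this
    exact hpq
  · exact hPout s hsS (Or.inr h3)

end Hub3

section Hub4

variable {V : Type*} {G : SimpleGraph V} {α : Type*} [LinearOrder α]

/-- Case II.b.2: `IL = IR = ∅` — there is a hub. -/
lemma IIb2 {f : V → α} (hx : NCross G f) (hinj : Function.Injective f)
    {p q m : V} (hpq : G.Adj p q) (hpm : f p < f m) (hmq : f m < f q)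
    {S : Finset V}
    (hconn : ∀ x ∈ S, ∀ y ∈ S, x ≠ y → Conn G x y)
    (hm : m ∈ S)
    (hILe : ∀ s ∈ S, ¬(f p < f s ∧ f s < f m))
    (hIRe : ∀ s ∈ S, ¬(f m < f s ∧ f s < f q))
    (hL3 : 3 ≤ (S.filter (fun s => f s < f m)).card)
    (hR3 : 3 ≤ (S.filter (fun s => f m < f s)).card) :
    ∃ h : V, ∀ s ∈ S, s ≠ h → G.Adj h s := by
  classical
  have hpq_lt : f p < f q := lt_trans hpm hmq
  -- two elements on each outer side
  have hOL2 : 2 ≤ (S.filter (fun s => f s < f p)).card := by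
    have hsub : S.filter (fun s => f s < f m) ⊆ insert p (S.filter (fun s => f s < f p)) := by
      intro s hs
      rw [Finset.mem_filter] at hs
      rcases lt_trichotomy (f s) (f p) with h | h | h
      · simp [Finset.mem_filter, hs.1, h]
      · simp [hinj h]
      · exact absurd ⟨h, hs.2⟩ (hILe s hs.1)
    have := Finset.card_le_card hsub
    have := Finset.card_insert_le p (S.filter (fun s => f s < f p))
    omega
  have hOR2 : 2 ≤ (S.filter (fun s => f q < f s)).card := by
    have hsub : S.filter (fun s => f m < f s) ⊆ insert q (S.filter (fun s => f q < f s)) := by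
      intro s hs
      rw [Finset.mem_filter] at hs
      rcases lt_trichotomy (f s) (f q) with h | h | h
      · exact absurd ⟨hs.2, h⟩ (hIRe s hs.1)
      · simp [hinj h]
      · simp [Finset.mem_filter, hs.1, h]
    have := Finset.card_le_card hsub
    have := Finset.card_insert_le q (S.filter (fun s => f q < f s))
    omega
  obtain ⟨ol1, hol1, ol2, hol2, hol12⟩ := two_sorted hinj hOL2
  obtain ⟨or1, hor1, or2, hor2, hor12⟩ := two_sorted hinj hOR2
  rw [Finset.mem_filter] at hol1 hol2 hor1 hor2
  obtain ⟨hol1S, hol1p⟩ := hol1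
  obtain ⟨hol2S, hol2p⟩ := hol2
  obtain ⟨hor1S, hor1q⟩ := hor1
  obtain ⟨hor2S, hor2q⟩ := hor2
  -- the out disjunction
  have hDisj : ∀ o ∈ S, (f o < f p ∨ f q < f o) →
      (G.Adj m p ∧ G.Adj p o) ∨ (G.Adj m q ∧ G.Adj q o) := by
    intro o hoS ho
    have hne : m ≠ o := by
      rintro rfl
      rcases ho with h | h
      · exact absurd (lt_trans h hpm) (lt_irrefl _)
      · exact absurd (lt_trans hmq h) (lt_irrefl _)
    exact hubW hx hinj hpq hpm hmq ho (hconn m hm o hoS hne)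
  by_cases hmp : G.Adj m p
  · by_cases hmq2 : G.Adj m q
    · by_cases hallp : ∀ o ∈ S, (f o < f p ∨ f q < f o) → G.Adj p o
      · -- hub p
        refine ⟨p, fun s hsS hsp => ?_⟩
        rcases lt_trichotomy (f s) (f p) with h1 | h1 | h1
        · exact hallp s hsS (Or.inl h1)
        · exact absurd (hinj h1) hsp
        rcases lt_trichotomy (f s) (f m) with h2 | h2 | h2
        · exact absurd ⟨h1, h2⟩ (hILe s hsS)
        · exact (hinj h2) ▸ hmp.symm
        rcases lt_trichotomy (f s) (f q) with h3 | h3 | h3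
        · exact absurd ⟨h2, h3⟩ (hIRe s hsS)
        · exact (hinj h3) ▸ hpq
        · exact hallp s hsS (Or.inr h3)
      · push_neg at hallp
        obtain ⟨o_x, hoxS, hoxout, hnpox⟩ := hallp
        have hqox : G.Adj q o_x :=
          ((hDisj o_x hoxS hoxout).resolve_left (fun h => hnpox h.2)).2
        by_cases hallq : ∀ o ∈ S, (f o < f p ∨ f q < f o) → G.Adj q o
        · -- hub q
          refine ⟨q, fun s hsS hsq => ?_⟩
          rcases lt_trichotomy (f s) (f p) with h1 | h1 | h1
          · exact hallq s hsS (Or.inl h1)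
          · exact (hinj h1) ▸ hpq.symm
          rcases lt_trichotomy (f s) (f m) with h2 | h2 | h2
          · exact absurd ⟨h1, h2⟩ (hILe s hsS)
          · exact (hinj h2) ▸ hmq2.symm
          rcases lt_trichotomy (f s) (f q) with h3 | h3 | h3
          · exact absurd ⟨h2, h3⟩ (hIRe s hsS)
          · exact absurd (hinj h3) hsq
          · exact hallq s hsS (Or.inr h3)
        · exfalso
          push_neg at hallq
          obtain ⟨o_y, hoyS, hoyout, hnqoy⟩ := hallq
          have hpoy : G.Adj p o_y :=
            ((hDisj o_y hoyS hoyout).resolve_right (fun h => hnqoy h.2)).2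
          have hnexy : o_x ≠ o_y := by
            rintro rfl
            exact hnqoy hqox
          have hfne : f o_x ≠ f o_y := fun h => hnexy (hinj h)
          -- dual data
          have hxd : NCross G (fun v => OrderDual.toDual (f v)) := hx.dual
          have hinjd : Function.Injective (fun v => OrderDual.toDual (f v)) :=
            fun u v h => hinj (congrArg OrderDual.ofDual h)
          rcases hoxout with hxL | hxR <;> rcases hoyout with hyL | hyR
          · -- both left
            rcases hfne.lt_or_gt with hxy | hyx
            · -- f o_x < f o_y
              have hqr : ∀ r ∈ S, f q < f r → G.Adj q r := by
                intro r hrS h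
                refine ((hDisj r hrS (Or.inr h)).resolve_left (fun hh => ?_)).2
                exact hx hqox.symm hh.2 hxL hpq_lt h
              have hne1 : o_y ≠ or1 := fun h =>
                absurd (h ▸ (lt_trans hyL (lt_trans hpq_lt hor1q))) (lt_irrefl _)
              exact killK hx hinj hqox.symm (hqr or2 hor2S hor2q)
                (fun h => hnqoy h.symm) hxy (lt_trans hyL hpq_lt) le_rfl hor1q hor12
                (hconn o_y hoyS or1 hor1S hne1)
            · -- f o_y < f o_x
              exact hx hpoy.symm hqox.symm hyx hxL hpq_lt
          · -- o_x left, o_y right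
            exact hx hqox.symm hpoy hxL hpq_lt hyR
          · -- o_x right, o_y left : case C4
            by_cases hlq : ∃ l ∈ S, f l < f p ∧ G.Adj q l
            · obtain ⟨lq, hlqS, hlqp, hqlq⟩ := hlq
              have hlqoy : f lq < f o_y := by
                rcases lt_trichotomy (f lq) (f o_y) with h | h | h
                · exact h
                · exact absurd ((hinj h) ▸ hqlq) hnqoy
                · exact absurd (hx hpoy.symm hqlq.symm h hlqp hpq_lt) not_false
              have hqr : ∀ r ∈ S, f q < f r → G.Adj q r := by
                intro r hrS h
                refine ((hDisj r hrS (Or.inr h)).resolve_left (fun hh => ?_)).2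
                exact hx hqlq.symm hh.2 hlqp hpq_lt h
              have hne1 : o_y ≠ or1 := fun h =>
                absurd (h ▸ (lt_trans hyL (lt_trans hpq_lt hor1q))) (lt_irrefl _)
              exact killK hx hinj hqlq.symm (hqr or2 hor2S hor2q)
                (fun h => hnqoy h.symm) hlqoy (lt_trans hyL hpq_lt) le_rfl hor1q hor12
                (hconn o_y hoyS or1 hor1S hne1)
            · have hpl : ∀ l ∈ S, f l < f p → G.Adj p l := by
                intro l hlS h
                refine ((hDisj l hlS (Or.inl h)).resolve_right (fun hh => ?_)).2
                exact hlq ⟨l, hlS, h, hh.2⟩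
              by_cases hrp : ∃ r ∈ S, f q < f r ∧ G.Adj p r
              · obtain ⟨rp, hrpS, hqrp, hprp⟩ := hrp
                have hoxrp : f o_x < f rp := by
                  rcases lt_trichotomy (f o_x) (f rp) with h | h | h
                  · exact h
                  · exact absurd ((hinj h).symm ▸ hprp) hnpox
                  · exact absurd (hx hprp hqox hpq_lt hqrp h) not_false
                have hne1 : o_x ≠ ol2 := fun h =>
                  absurd (h ▸ (lt_trans hol2p (lt_trans hpq_lt hxR))) (lt_irrefl _)
                exact killK hxd hinjd hprp.symm (hpl ol1 hol1S hol1p)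
                  (fun h => hnpox h.symm) (OrderDual.toDual_lt_toDual.mpr hoxrp)
                  (OrderDual.toDual_lt_toDual.mpr (lt_trans hpq_lt hxR)) le_rfl
                  (OrderDual.toDual_lt_toDual.mpr hol2p)
                  (OrderDual.toDual_lt_toDual.mpr hol12)
                  (hconn o_x hoxS ol2 hol2S hne1)
              · have hqr : ∀ r ∈ S, f q < f r → G.Adj q r := by
                  intro r hrS h
                  refine ((hDisj r hrS (Or.inr h)).resolve_left (fun hh => ?_)).2
                  exact hrp ⟨r, hrS, h, hh.2⟩
                have hne1 : ol2 ≠ or1 := fun h =>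
                  absurd (h ▸ (lt_trans hol2p (lt_trans hpq_lt hor1q))) (lt_irrefl _)
                exact killK hx hinj (hpl ol1 hol1S hol1p).symm (hqr or2 hor2S hor2q)
                  (fun h => hlq ⟨ol2, hol2S, hol2p, h.symm⟩) hol12 hol2p (le_of_lt hpq_lt)
                  hor1q hor12 (hconn ol2 hol2S or1 hor1S hne1)
          · -- both right
            rcases hfne.lt_or_gt with hxy | hyx
            · -- f o_x < f o_y
              have hpl : ∀ l ∈ S, f l < f p → G.Adj p l := by
                intro l hlS h
                refine ((hDisj l hlS (Or.inl h)).resolve_right (fun hh => ?_)).2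
                exact hx hh.2.symm hpoy h hpq_lt hyR
              have hne1 : o_x ≠ ol2 := fun h =>
                absurd (h ▸ (lt_trans hol2p (lt_trans hpq_lt hxR))) (lt_irrefl _)
              exact killK hxd hinjd hpoy.symm (hpl ol1 hol1S hol1p)
                (fun h => hnpox h.symm) (OrderDual.toDual_lt_toDual.mpr hxy)
                (OrderDual.toDual_lt_toDual.mpr (lt_trans hpq_lt hxR)) le_rfl
                (OrderDual.toDual_lt_toDual.mpr hol2p)
                (OrderDual.toDual_lt_toDual.mpr hol12)
                (hconn o_x hoxS ol2 hol2S hne1)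
            · -- f o_y < f o_x
              exact hx hpoy hqox hpq_lt hyR hyx
    · -- ¬ Adj m q : all outs adjacent to p, hub p
      have hallp : ∀ o ∈ S, (f o < f p ∨ f q < f o) → G.Adj p o := fun o hoS ho =>
        ((hDisj o hoS ho).resolve_right (fun h => hmq2 h.1)).2
      refine ⟨p, fun s hsS hsp => ?_⟩
      rcases lt_trichotomy (f s) (f p) with h1 | h1 | h1
      · exact hallp s hsS (Or.inl h1)
      · exact absurd (hinj h1) hsp
      rcases lt_trichotomy (f s) (f m) with h2 | h2 | h2
      · exact absurd ⟨h1, h2⟩ (hILe s hsS)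
      · exact (hinj h2) ▸ hmp.symm
      rcases lt_trichotomy (f s) (f q) with h3 | h3 | h3
      · exact absurd ⟨h2, h3⟩ (hIRe s hsS)
      · exact (hinj h3) ▸ hpq
      · exact hallp s hsS (Or.inr h3)
  · -- ¬ Adj m p : all outs adjacent to q, hub q
    have hallq : ∀ o ∈ S, (f o < f p ∨ f q < f o) → G.Adj m q ∧ G.Adj q o := fun o hoS ho =>
      (hDisj o hoS ho).resolve_left (fun h => hmp h.1)
    have hmq2 : G.Adj m q := (hallq ol1 hol1S (Or.inl hol1p)).1
    refine ⟨q, fun s hsS hsq => ?_⟩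
    rcases lt_trichotomy (f s) (f p) with h1 | h1 | h1
    · exact (hallq s hsS (Or.inl h1)).2
    · exact (hinj h1) ▸ hpq.symm
    rcases lt_trichotomy (f s) (f m) with h2 | h2 | h2
    · exact absurd ⟨h1, h2⟩ (hILe s hsS)
    · exact (hinj h2) ▸ hmq2.symm
    rcases lt_trichotomy (f s) (f q) with h3 | h3 | h3
    · exact absurd ⟨h2, h3⟩ (hIRe s hsS)
    · exact absurd (hinj h3) hsq
    · exact (hallq s hsS (Or.inr h3)).2

end Hub4

section Hub5

variable {V : Type*} {G : SimpleGraph V} {α : Type*} [LinearOrder α]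

lemma H2fact {f : V → α} (hx : NCross G f) (hinj : Function.Injective f)
    {p q m x y : V} (hpq : G.Adj p q) (hpm : f p < f m) (hmq : f m < f q)
    (hinner : ∀ a b, G.Adj a b → f a < f m → f m < f b → f a ≤ f p ∧ f q ≤ f b)
    (hc : Conn G x y) (hpx : f p < f x) (hxm : f x < f m)
    (hmy : f m < f y) (hyq : f y < f q) : G.Adj x m ∧ G.Adj m y := by
  rcases hc with h | ⟨w, h1, h2⟩
  · exact absurd (hinner x y h hxm hmy).1 (not_le.mpr hpx)
  · rcases lt_trichotomy (f w) (f m) with hw | hw | hw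
    · exact absurd (hinner w y h2 hw hmy).2 (not_le.mpr hyq)
    · have : w = m := hinj hw
      subst this
      exact ⟨h1, h2⟩
    · exact absurd (hinner x w h1 hxm hw).1 (not_le.mpr hpx)

lemma exists_middle {f : V → α} (hinj : Function.Injective f)
    {S : Finset V} (hcard : 7 ≤ S.card) :
    ∃ m ∈ S, 3 ≤ (S.filter (fun s => f s < f m)).card ∧
      3 ≤ (S.filter (fun s => f m < f s)).card := by
  classical
  have hTcard : (S.image f).card = S.card := Finset.card_image_of_injective S hinj
  have h7 : 7 ≤ (S.image f).card := by omega
  set e := (S.image f).orderIsoOfFin rfl with he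
  obtain ⟨m, hmS, hfm⟩ := Finset.mem_image.mp (e ⟨3, by omega⟩).2
  have himgL : ((S.image f).filter (fun t => t < f m)).card
      = (S.filter (fun s => f s < f m)).card := by
    rw [Finset.filter_image]
    exact Finset.card_image_of_injective _ hinj
  have himgR : ((S.image f).filter (fun t => f m < t)).card
      = (S.filter (fun s => f m < f s)).card := by
    rw [Finset.filter_image]
    exact Finset.card_image_of_injective _ hinj
  have hL3 : 3 ≤ (S.filter (fun s => f s < f m)).card := by
    rw [← himgL]
    have hg : ∀ i : Fin 3, (⟨(i : ℕ), by have := i.isLt; omega⟩ : Fin (S.image f).card)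
        < (⟨3, by omega⟩ : Fin (S.image f).card) := by
      intro i
      have := i.isLt
      simp only [Fin.lt_def]
      omega
    have hmain : ((Finset.univ : Finset (Fin 3)).card ≤
        ((S.image f).filter (fun t => t < f m)).card) := by
      refine Finset.card_le_card_of_injOn
        (fun i => (e (⟨(i : ℕ), by have := i.isLt; omega⟩ : Fin (S.image f).card) : α))
        (fun i _ => ?_) (fun i _ j _ hij => ?_)
      · rw [Finset.mem_coe, Finset.mem_filter]
        refine ⟨(e _).2, ?_⟩
        rw [hfm]
        exact Subtype.coe_lt_coe.mpr (e.strictMono (hg i))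
      · have h2 := e.injective (Subtype.coe_injective hij)
        simpa [Fin.ext_iff] using congrArg Fin.val h2
    simpa using hmain
  have hR3 : 3 ≤ (S.filter (fun s => f m < f s)).card := by
    rw [← himgR]
    have hg : ∀ i : Fin 3, (⟨3, by omega⟩ : Fin (S.image f).card)
        < (⟨4 + (i : ℕ), by have := i.isLt; omega⟩ : Fin (S.image f).card) := by
      intro i
      simp only [Fin.lt_def]
      omega
    have hmain : ((Finset.univ : Finset (Fin 3)).card ≤
        ((S.image f).filter (fun t => f m < t)).card) := by
      refine Finset.card_le_card_of_injOn
        (fun i => (e (⟨4 + (i : ℕ), by have := i.isLt; omega⟩ : Fin (S.image f).card) : α))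
        (fun i _ => ?_) (fun i _ j _ hij => ?_)
      · rw [Finset.mem_coe, Finset.mem_filter]
        refine ⟨(e _).2, ?_⟩
        rw [hfm]
        exact Subtype.coe_lt_coe.mpr (e.strictMono (hg i))
      · have h2 := e.injective (Subtype.coe_injective hij)
        simpa [Fin.ext_iff] using congrArg Fin.val h2
    simpa using hmain
  exact ⟨m, hmS, hL3, hR3⟩

lemma hub_exists [Fintype V] {f : V → α} (hx : NCross G f) (hinj : Function.Injective f)
    {S : Finset V} (hcard : 7 ≤ S.card)
    (hconn : ∀ x ∈ S, ∀ y ∈ S, x ≠ y → Conn G x y) :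
    ∃ h : V, ∀ s ∈ S, s ≠ h → G.Adj h s := by
  classical
  obtain ⟨m, hmS, hL3, hR3⟩ := exists_middle hinj hcard
  -- dual data
  have hxd : NCross G (fun v => OrderDual.toDual (f v)) := hx.dual
  have hinjd : Function.Injective (fun v => OrderDual.toDual (f v)) :=
    fun u v h => hinj (congrArg OrderDual.ofDual h)
  by_cases hedge : ∃ a b, G.Adj a b ∧ f a < f m ∧ f m < f b
  · obtain ⟨p, q, hpq, hpm, hmq, hinner⟩ := innermost hx hinj hedge
    have hpq_lt : f p < f q := lt_trans hpm hmq
    have hinnerd : ∀ a b, G.Adj a b →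
        (fun v => OrderDual.toDual (f v)) a < (fun v => OrderDual.toDual (f v)) m →
        (fun v => OrderDual.toDual (f v)) m < (fun v => OrderDual.toDual (f v)) b →
        (fun v => OrderDual.toDual (f v)) a ≤ (fun v => OrderDual.toDual (f v)) q ∧
        (fun v => OrderDual.toDual (f v)) p ≤ (fun v => OrderDual.toDual (f v)) b := by
      intro a b hab h1 h2
      have h1' : f m < f a := OrderDual.toDual_lt_toDual.mp h1
      have h2' : f b < f m := OrderDual.toDual_lt_toDual.mp h2
      obtain ⟨hb, ha⟩ := hinner b a hab.symm h2' h1'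
      exact ⟨OrderDual.toDual_le_toDual.mpr ha, OrderDual.toDual_le_toDual.mpr hb⟩
    by_cases hIL : ∃ x ∈ S, f p < f x ∧ f x < f m
    · by_cases hIR : ∃ y ∈ S, f m < f y ∧ f y < f q
      · obtain ⟨x0, hx0S, hx0p, hx0m⟩ := hIL
        obtain ⟨y0, hy0S, hy0m, hy0q⟩ := hIR
        have hILm : ∀ x ∈ S, f p < f x → f x < f m → G.Adj x m := by
          intro x hxS h1 h2
          have hne : x ≠ y0 := fun h => absurd (h ▸ lt_trans h2 hy0m) (lt_irrefl _)
          exact (H2fact hx hinj hpq hpm hmq hinner (hconn x hxS y0 hy0S hne)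
            h1 h2 hy0m hy0q).1
        have hIRm : ∀ y ∈ S, f m < f y → f y < f q → G.Adj m y := by
          intro y hyS h1 h2
          have hne : x0 ≠ y := fun h => absurd (h ▸ lt_trans hx0m h1) (lt_irrefl _)
          exact (H2fact hx hinj hpq hpm hmq hinner (hconn x0 hx0S y hyS hne)
            hx0p hx0m h1 h2).2
        by_cases hOut : ∃ o ∈ S, f o < f p ∨ f q < f o
        · exfalso
          obtain ⟨o0, ho0S, ho0⟩ := hOut
          have hILpo : ∀ x ∈ S, f p < f x → f x < f m →
              ∀ o ∈ S, (f o < f p ∨ f q < f o) → G.Adj x p ∧ G.Adj p o := by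
            intro x hxS h1 h2 o hoS ho
            have hne : x ≠ o := by
              rintro rfl
              rcases ho with h | h
              · exact absurd (lt_trans h h1) (lt_irrefl _)
              · exact absurd (lt_trans (lt_trans h2 hmq) h) (lt_irrefl _)
            rcases hubW hx hinj hpq h1 (lt_trans h2 hmq) ho
              (hconn x hxS o hoS hne) with hr | hr
            · exact hr
            · exact absurd (hinner x q hr.1 h2 hmq).1 (not_le.mpr h1)
          have hIRqo : ∀ y ∈ S, f m < f y → f y < f q →
              ∀ o ∈ S, (f o < f p ∨ f q < f o) → G.Adj y q ∧ G.Adj q o := by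
            intro y hyS h1 h2 o hoS ho
            have hne : y ≠ o := by
              rintro rfl
              rcases ho with h | h
              · exact absurd (lt_trans (lt_trans h hpm) h1) (lt_irrefl _)
              · exact absurd (lt_trans h2 h) (lt_irrefl _)
            rcases hubW hx hinj hpq (lt_trans hpm h1) h2 ho
              (hconn y hyS o hoS hne) with hr | hr
            · exact absurd (hinner p y hr.1.symm hpm h1).2 (not_le.mpr h2)
            · exact hr
          set ILF := S.filter (fun s => f p < f s ∧ f s < f m) with hILF
          set IRF := S.filter (fun s => f m < f s ∧ f s < f q) with hIRF
          set OutF := S.filter (fun s => f s < f p ∨ f q < f s) with hOutF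
          have hkeyO : ∀ o1 ∈ OutF, ∀ o2 ∈ OutF, f o1 < f o2 → False := by
            intro o1 ho1 o2 ho2 h12
            rw [hOutF, Finset.mem_filter] at ho1 ho2
            obtain ⟨ho1S, ho1pos⟩ := ho1
            obtain ⟨ho2S, ho2pos⟩ := ho2
            rcases ho1pos with hL1 | hR1 <;> rcases ho2pos with hL2 | hR2
            · exact hx ((hILpo x0 hx0S hx0p hx0m o1 ho1S (Or.inl hL1)).2).symm
                ((hIRqo y0 hy0S hy0m hy0q o2 ho2S (Or.inl hL2)).2).symm h12 hL2 hpq_lt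
            · exact hx ((hIRqo y0 hy0S hy0m hy0q o1 ho1S (Or.inl hL1)).2).symm
                ((hILpo x0 hx0S hx0p hx0m o2 ho2S (Or.inr hR2)).2) hL1 hpq_lt hR2
            · exact absurd (lt_trans (lt_trans (lt_trans h12 hL2) hpq_lt) hR1)
                (lt_irrefl _)
            · exact hx ((hILpo x0 hx0S hx0p hx0m o1 ho1S (Or.inr hR1)).2)
                ((hIRqo y0 hy0S hy0m hy0q o2 ho2S (Or.inr hR2)).2) hpq_lt hR1 h12
          have hO1 : OutF.card ≤ 1 := by
            rw [Finset.card_le_one]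
            intro a ha b hb
            by_contra hne
            have hfne : f a ≠ f b := fun h => hne (hinj h)
            rcases hfne.lt_or_gt with h | h
            · exact hkeyO a ha b hb h
            · exact hkeyO b hb a ha h
          have hIL1 : ILF.card ≤ 1 := by
            rw [Finset.card_le_one]
            intro a ha b hb
            rw [hILF, Finset.mem_filter] at ha hb
            by_contra hne
            have hfne : f a ≠ f b := fun h => hne (hinj h)
            rcases hfne.lt_or_gt with h | h
            · exact hx ((hILpo b hb.1 hb.2.1 hb.2.2 o0 ho0S ho0).1).symm
                (hILm a ha.1 ha.2.1 ha.2.2) ha.2.1 h hb.2.2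
            · exact hx ((hILpo a ha.1 ha.2.1 ha.2.2 o0 ho0S ho0).1).symm
                (hILm b hb.1 hb.2.1 hb.2.2) hb.2.1 h ha.2.2
          have hIR1 : IRF.card ≤ 1 := by
            rw [Finset.card_le_one]
            intro a ha b hb
            rw [hIRF, Finset.mem_filter] at ha hb
            by_contra hne
            have hfne : f a ≠ f b := fun h => hne (hinj h)
            rcases hfne.lt_or_gt with h | h
            · exact hx (hIRm b hb.1 hb.2.1 hb.2.2)
                ((hIRqo a ha.1 ha.2.1 ha.2.2 o0 ho0S ho0).1) ha.2.1 h hb.2.2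
            · exact hx (hIRm a ha.1 ha.2.1 ha.2.2)
                ((hIRqo b hb.1 hb.2.1 hb.2.2 o0 ho0S ho0).1) hb.2.1 h ha.2.2
          have hsub : S ⊆ ILF ∪ IRF ∪ OutF ∪ {p, q, m} := by
            intro s hs
            have hmem : s ∈ ILF ∨ s ∈ IRF ∨ s ∈ OutF ∨ s ∈ ({p, q, m} : Finset V) := by
              rcases lt_trichotomy (f s) (f p) with h1 | h1 | h1
              · exact Or.inr (Or.inr (Or.inl (by
                  rw [hOutF, Finset.mem_filter]; exact ⟨hs, Or.inl h1⟩)))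
              · exact Or.inr (Or.inr (Or.inr (by simp [hinj h1])))
              rcases lt_trichotomy (f s) (f m) with h2 | h2 | h2
              · exact Or.inl (by rw [hILF, Finset.mem_filter]; exact ⟨hs, h1, h2⟩)
              · exact Or.inr (Or.inr (Or.inr (by simp [hinj h2])))
              rcases lt_trichotomy (f s) (f q) with h3 | h3 | h3
              · exact Or.inr (Or.inl (by rw [hIRF, Finset.mem_filter]; exact ⟨hs, h2, h3⟩))
              · exact Or.inr (Or.inr (Or.inr (by simp [hinj h3])))
              · exact Or.inr (Or.inr (Or.inl (by
                  rw [hOutF, Finset.mem_filter]; exact ⟨hs, Or.inr h3⟩)))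
            rcases hmem with h | h | h | h
            · exact Finset.mem_union_left _ (Finset.mem_union_left _
                (Finset.mem_union_left _ h))
            · exact Finset.mem_union_left _ (Finset.mem_union_left _
                (Finset.mem_union_right _ h))
            · exact Finset.mem_union_left _ (Finset.mem_union_right _ h)
            · exact Finset.mem_union_right _ h
          have hc1 := Finset.card_le_card hsub
          have hc2 := Finset.card_union_le (ILF ∪ IRF ∪ OutF) ({p, q, m} : Finset V)
          have hc3 := Finset.card_union_le (ILF ∪ IRF) OutF
          have hc4 := Finset.card_union_le ILF IRF
          have hc5 : ({p, q, m} : Finset V).card ≤ 3 := by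
            apply le_trans (Finset.card_insert_le _ _)
            have := Finset.card_insert_le q ({m} : Finset V)
            simp only [Finset.card_singleton] at this ⊢
            omega
          omega
        · have hnoout : ∀ s ∈ S, f p ≤ f s ∧ f s ≤ f q := by
            intro s hs
            constructor
            · by_contra h
              push_neg at h
              exact hOut ⟨s, hs, Or.inl h⟩
            · by_contra h
              push_neg at h
              exact hOut ⟨s, hs, Or.inr h⟩
          refine ⟨m, fun s hsS hsm => ?_⟩
          rcases lt_trichotomy (f s) (f m) with h2 | h2 | h2
          · rcases eq_or_lt_of_le (hnoout s hsS).1 with h1 | h1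
            · have hsp : s = p := hinj h1.symm
              subst hsp
              exact IIa_mp hx hinj hpq hpm hmq hinner hcard hconn hmS hsS hnoout
                ⟨x0, hx0S, hx0p, hx0m⟩ ⟨y0, hy0S, hy0m, hy0q⟩
            · exact (hILm s hsS h1 h2).symm
          · exact absurd (hinj h2) hsm
          · rcases eq_or_lt_of_le (hnoout s hsS).2 with h1 | h1
            · have hsq : s = q := hinj h1
              subst hsq
              exact IIa_mp hxd hinjd hpq.symm (OrderDual.toDual_lt_toDual.mpr hmq)
                (OrderDual.toDual_lt_toDual.mpr hpm) hinnerd hcard hconn hmS hsS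
                (fun s hs => ⟨OrderDual.toDual_le_toDual.mpr (hnoout s hs).2,
                  OrderDual.toDual_le_toDual.mpr (hnoout s hs).1⟩)
                ⟨y0, hy0S, OrderDual.toDual_lt_toDual.mpr hy0q,
                  OrderDual.toDual_lt_toDual.mpr hy0m⟩
                ⟨x0, hx0S, OrderDual.toDual_lt_toDual.mpr hx0m,
                  OrderDual.toDual_lt_toDual.mpr hx0p⟩
            · exact hIRm s hsS h2 h1
      · -- IL nonempty, IR empty : hub p
        exact ⟨p, IIb1 hx hinj hpq hpm hmq hinner hconn hmS
          (fun s hs hP => hIR ⟨s, hs, hP⟩) hIL hR3⟩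
    · by_cases hIR : ∃ y ∈ S, f m < f y ∧ f y < f q
      · -- IL empty, IR nonempty : hub q via dual IIb1
        obtain ⟨y0, hy0S, hy0m, hy0q⟩ := hIR
        refine ⟨q, ?_⟩
        have hfiltereq : S.filter (fun s => (fun v => OrderDual.toDual (f v)) m
            < (fun v => OrderDual.toDual (f v)) s) = S.filter (fun s => f s < f m) := by
          apply Finset.filter_congr
          intro x _
          simp
        exact IIb1 hxd hinjd hpq.symm (OrderDual.toDual_lt_toDual.mpr hmq)
          (OrderDual.toDual_lt_toDual.mpr hpm) hinnerd hconn hmS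
          (fun s hs hP => hIL ⟨s, hs, OrderDual.toDual_lt_toDual.mp hP.2,
            OrderDual.toDual_lt_toDual.mp hP.1⟩)
          ⟨y0, hy0S, OrderDual.toDual_lt_toDual.mpr hy0q,
            OrderDual.toDual_lt_toDual.mpr hy0m⟩
          (by rw [hfiltereq]; exact hL3)
      · -- both empty : IIb2
        exact IIb2 hx hinj hpq hpm hmq hconn hmS
          (fun s hs hP => hIL ⟨s, hs, hP⟩) (fun s hs hP => hIR ⟨s, hs, hP⟩) hL3 hR3
  · -- Case I : no edge over m, m itself is a hub
    refine ⟨m, fun s hsS hsm => ?_⟩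
    have hfsm : f s ≠ f m := fun h => hsm (hinj h)
    rcases hfsm.lt_or_gt with h | h
    · have hpos : 0 < (S.filter (fun s => f m < f s)).card := by omega
      obtain ⟨y, hy⟩ := Finset.card_pos.mp hpos
      rw [Finset.mem_filter] at hy
      have hne : s ≠ y := fun hh =>
        absurd (hh ▸ (lt_trans h hy.2)) (lt_irrefl _)
      rcases hconn s hsS y hy.1 hne with hadj | ⟨w, h1, h2⟩
      · exact absurd ⟨s, y, hadj, h, hy.2⟩ hedge
      · rcases lt_trichotomy (f w) (f m) with hw | hw | hw
        · exact absurd ⟨w, y, h2, hw, hy.2⟩ hedge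
        · exact ((hinj hw) ▸ h1 : G.Adj s m).symm
        · exact absurd ⟨s, w, h1, h, hw⟩ hedge
    · have hpos : 0 < (S.filter (fun s => f s < f m)).card := by omega
      obtain ⟨z, hz⟩ := Finset.card_pos.mp hpos
      rw [Finset.mem_filter] at hz
      have hne : z ≠ s := fun hh =>
        absurd (hh ▸ (lt_trans hz.2 h)) (lt_irrefl _)
      rcases hconn z hz.1 s hsS hne with hadj | ⟨w, h1, h2⟩
      · exact absurd ⟨z, s, hadj, hz.2, h⟩ hedge
      · rcases lt_trichotomy (f w) (f m) with hw | hw | hw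
        · exact absurd ⟨w, s, h2, hw, h⟩ hedge
        · exact (hinj hw) ▸ h2
        · exact absurd ⟨z, w, h1, hz.2, hw⟩ hedge

end Hub5

/-- For a finite outerplanar graph `G` with maximum degree
`Δ ≥ 6`, every clique of `G²` with `Δ + 1` vertices is the closed neighborhood of
some vertex of degree `Δ`. -/
theorem stmt15 {V : Type*} [Fintype V] (G : SimpleGraph V)
    (hout : G.IsOuterplanar) (hΔ : 6 ≤ G.maxDeg)
    (S : Finset V) (hcard : S.card = G.maxDeg + 1)
    (hclique : G.square.IsClique (S : Set V)) :
    ∃ v : V, G.deg v = G.maxDeg ∧ (S : Set V) = insert v (G.neighborSet v) := by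
  classical
  obtain ⟨f, hfinj, hnc⟩ := hout
  have hx : NCross G f := fun a b c d hab hcd h1 h2 h3 =>
    hnc a b c d hab hcd ⟨h1, h2, h3⟩
  have hconn : ∀ x ∈ S, ∀ y ∈ S, x ≠ y → Conn G x y := by
    intro x hxS y hyS hne
    exact (show x ≠ y ∧ Conn G x y from hclique (Finset.mem_coe.mpr hxS) (Finset.mem_coe.mpr hyS) hne).2
  have hcard7 : 7 ≤ S.card := by omega
  obtain ⟨h, hhub⟩ := hub_exists hx hfinj hcard7 hconn
  have hdegle : ∀ v, G.deg v ≤ G.maxDeg := fun v => Finset.le_sup (Finset.mem_univ v)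
  have hdd : ∀ v, G.deg v = (G.neighborSet v).ncard := fun v => rfl
  by_cases hh : h ∈ S
  · have hsub : (↑(S.erase h) : Set V) ⊆ G.neighborSet h := by
      intro s hs
      simp only [Finset.coe_erase, Set.mem_diff, Finset.mem_coe,
        Set.mem_singleton_iff] at hs
      exact hhub s hs.1 hs.2
    have hceq : (S.erase h).card = G.maxDeg := by
      rw [Finset.card_erase_of_mem hh, hcard]
      omega
    have hge : G.maxDeg ≤ G.deg h := by
      have h1 := Set.ncard_le_ncard hsub (Set.toFinite _)
      rw [Set.ncard_coe_finset, hceq] at h1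
      rwa [hdd]
    have hdeg : G.deg h = G.maxDeg := le_antisymm (hdegle h) hge
    refine ⟨h, hdeg, ?_⟩
    have hNeq : (↑(S.erase h) : Set V) = G.neighborSet h := by
      refine Set.eq_of_subset_of_ncard_le hsub ?_ (Set.toFinite _)
      rw [Set.ncard_coe_finset, hceq, ← hdd, hdeg]
    have hS : (S : Set V) = insert h (↑(S.erase h) : Set V) := by
      conv_lhs => rw [← Finset.insert_erase hh]
      rw [Finset.coe_insert]
    rw [hS, hNeq]
  · exfalso
    have hsub : (S : Set V) ⊆ G.neighborSet h := by
      intro s hs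
      have hsS : s ∈ S := Finset.mem_coe.mp hs
      exact hhub s hsS (fun he => hh (he ▸ hsS))
    have h1 := Set.ncard_le_ncard hsub (Set.toFinite _)
    rw [Set.ncard_coe_finset, hcard] at h1
    have h2 := hdegle h
    rw [hdd] at h2
    omega
end

section
/- For every N ∈ ℕ there exist n ≥ N and a finite simple graph G on n vertices that is biconnected and outerplanar, has maximum degree 5, and satisfies χ(G²) = 7. -/
open SimpleGraph

/-! ### Auxiliary construction for statement 16 -/



def ch' (x y : ℕ) : Prop :=
  (x=0∧y=11)∨(x=1∧y=3)∨(x=1∧y=4)∨(x=4∧y=6)∨(x=1∧y=8)∨(x=4∧y=8)∨(x=8∧y=11)∨(x=9∧y=11)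
instance : ∀ x y, Decidable (ch' x y) := fun x y => by unfold ch'; infer_instance
def uc' (x y : ℕ) : Prop := x+1=y ∨ y+1=x ∨ ch' x y ∨ ch' y x
instance : ∀ x y, Decidable (uc' x y) := fun x y => by unfold uc'; infer_instance
def st' (n x y : ℕ) : Prop := uc' x y ∨ (x=0 ∧ y=n-1) ∨ (y=0 ∧ x=n-1)

lemma uc'_symm {x y : ℕ} (h : uc' x y) : uc' y x := by
  unfold uc' at h ⊢; tauto
lemma st'_symm {n x y : ℕ} (h : st' n x y) : st' n y x := by
  unfold st' at h ⊢
  rcases h with h | h | h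
  · exact Or.inl (uc'_symm h)
  · exact Or.inr (Or.inr h)
  · exact Or.inr (Or.inl h)

@[reducible] def myG (n : ℕ) : SimpleGraph (Fin n) where
  Adj a b := a ≠ b ∧ st' n a.val b.val
  symm := ⟨fun _ _ h => ⟨h.1.symm, st'_symm h.2⟩⟩
  loopless := ⟨fun _ h => h.1 rfl⟩

def tab' : ℕ → Fin 7 := fun x =>
  match x with
  | 0 => 0 | 1 => 1 | 2 => 2 | 3 => 3 | 4 => 4 | 5 => 0 | 6 => 2 | 7 => 3
  | 8 => 5 | 9 => 2 | 10 => 1 | 11 => 6 | _ => 0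

def colN : ℕ → Fin 7 := fun x =>
  if x < 12 then tab' x else (match x % 3 with | 0 => 3 | 1 => 1 | _ => 2)

lemma Lsmall : ∀ a b w : Fin 18, a.val ≠ b.val →
    (uc' a.val b.val ∨ (uc' a.val w.val ∧ uc' w.val b.val)) →
    colN a.val ≠ colN b.val := by decide

lemma Ltail : ∀ a b : ℕ, 12 ≤ a → 12 ≤ b → a % 3 ≠ b % 3 → colN a ≠ colN b := by
  intro a b ha hb h
  unfold colN
  rw [if_neg (by omega), if_neg (by omega)]
  rcases (show a % 3 = 0 ∨ a % 3 = 1 ∨ a % 3 = 2 by omega) with h1|h1|h1 <;>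
    rcases (show b % 3 = 0 ∨ b % 3 = 1 ∨ b % 3 = 2 by omega) with h2|h2|h2 <;>
      first | omega | (rw [h1, h2]; decide)


lemma ucBound {x y : ℕ} (h : uc' x y) : (y = x+1 ∨ x = y+1) ∨ (x ≤ 11 ∧ y ≤ 11) := by
  unfold uc' ch' at h; omega

lemma ucNe {x y : ℕ} (h : uc' x y) : x ≠ y := by
  unfold uc' ch' at h; omega

lemma uc0 {a : ℕ} (h : uc' a 0) : a = 1 ∨ a = 11 := by
  unfold uc' ch' at h; omega

lemma colN_lt {x : ℕ} (h : x < 12) : colN x = tab' x := if_pos h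

lemma colN_n1 {n : ℕ} (h3 : n % 3 = 0) (h : 18 ≤ n) : colN (n-1) = 2 := by
  unfold colN
  rw [if_neg (by omega)]
  have : (n-1) % 3 = 2 := by omega
  rw [this]
  rfl

lemma colN_n2 {n : ℕ} (h3 : n % 3 = 0) (h : 18 ≤ n) : colN (n-2) = 1 := by
  unfold colN
  rw [if_neg (by omega)]
  have : (n-2) % 3 = 1 := by omega
  rw [this]
  rfl

lemma master {n a b : ℕ} (hn3 : n % 3 = 0) (hn : 18 ≤ n) (ha : a < n) (hb : b < n)
    (hne : a ≠ b)
    (h : st' n a b ∨ ∃ w, w < n ∧ st' n a w ∧ st' n w b) : colN a ≠ colN b := by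
  rcases h with h | ⟨w, hw, h1, h2⟩
  · rcases h with huc | hz | hz
    · rcases ucBound huc with hu | hsm
      · by_cases hs : a ≤ 11 ∨ b ≤ 11
        · exact Lsmall ⟨a, by omega⟩ ⟨b, by omega⟩ ⟨a, by omega⟩ hne (Or.inl huc)
        · exact Ltail a b (by omega) (by omega) (by omega)
      · exact Lsmall ⟨a, by omega⟩ ⟨b, by omega⟩ ⟨a, by omega⟩ hne (Or.inl huc)
    · rw [hz.1, hz.2, colN_n1 hn3 hn]; decide
    · rw [hz.1, hz.2, colN_n1 hn3 hn]; decide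
  · rcases h1 with u1 | z1 | z1 <;> rcases h2 with u2 | z2 | z2
    · -- uc, uc
      rcases ucBound u1 with v1 | s1 <;> rcases ucBound u2 with v2 | s2
      · by_cases hs : a ≤ 11 ∨ w ≤ 11 ∨ b ≤ 11
        · exact Lsmall ⟨a, by omega⟩ ⟨b, by omega⟩ ⟨w, by omega⟩ hne (Or.inr ⟨u1, u2⟩)
        · exact Ltail a b (by omega) (by omega) (by omega)
      · exact Lsmall ⟨a, by omega⟩ ⟨b, by omega⟩ ⟨w, by omega⟩ hne (Or.inr ⟨u1, u2⟩)
      · exact Lsmall ⟨a, by omega⟩ ⟨b, by omega⟩ ⟨w, by omega⟩ hne (Or.inr ⟨u1, u2⟩)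
      · exact Lsmall ⟨a, by omega⟩ ⟨b, by omega⟩ ⟨w, by omega⟩ hne (Or.inr ⟨u1, u2⟩)
    · -- uc then (w=0, b=n-1)
      rw [z2.1] at u1
      rw [z2.2, colN_n1 hn3 hn]
      rcases uc0 u1 with h1 | h1 <;> rw [h1] <;> decide
    · -- uc then (b=0, w=n-1)
      rw [z2.2] at u1
      have ha2 : a = n-2 := by rcases ucBound u1 with h | h <;> omega
      rw [ha2, z2.1, colN_n2 hn3 hn]; decide
    · -- (a=0, w=n-1) then uc
      rw [z1.2] at u2
      have hb2 : b = n-2 := by rcases ucBound u2 with h | h <;> omega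
      rw [hb2, z1.1, colN_n2 hn3 hn]; decide
    · omega
    · omega
    · -- (w=0, a=n-1) then uc
      rw [z1.1] at u2
      rw [z1.2, colN_n1 hn3 hn]
      rcases uc0 (uc'_symm u2) with h1 | h1 <;> rw [h1] <;> decide
    · omega
    · omega




lemma colorable7 {n : ℕ} (hn3 : n % 3 = 0) (hn : 18 ≤ n) :
    (myG n).square.Colorable 7 := by
  refine ⟨SimpleGraph.Coloring.mk (fun v => colN v.val) ?_⟩
  intro u v huv
  obtain ⟨hne, hadj⟩ : u ≠ v ∧ _ := huv
  have hne' : u.val ≠ v.val := fun h => hne (Fin.ext h)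
  apply master hn3 hn u.isLt v.isLt hne'
  rcases hadj with h | ⟨w, h1, h2⟩
  · exact Or.inl h.2
  · exact Or.inr ⟨w.val, w.isLt, h1.2, h2.2⟩

-- Lower bound machinery
def gsq (i j : Fin 12) : Prop :=
  i ≠ j ∧ (uc' i.val j.val ∨ ∃ w : Fin 12, uc' i.val w.val ∧ uc' w.val j.val)

instance : ∀ i j, Decidable (gsq i j) := fun i j => by unfold gsq; infer_instance

def gidx : Fin 6 → Fin 12 := ![0, 1, 2, 3, 4, 8]

set_option synthInstance.maxSize 2000 in
set_option synthInstance.maxHeartbeats 1000000 in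
lemma final : ∀ a b c e f : Fin 6,
    ¬(a ≠ 1 ∧ a ≠ 3 ∧ a ≠ 4 ∧ a ≠ 5 ∧
      b ≠ 1 ∧ b ≠ 3 ∧ b ≠ 4 ∧ b ≠ 5 ∧ b ≠ a ∧
      c ≠ 1 ∧ c ≠ 4 ∧ c ≠ 5 ∧ c ≠ a ∧ c ≠ b ∧
      e ≠ 0 ∧ e ≠ 1 ∧ e ≠ 4 ∧ e ≠ 5 ∧ e ≠ c ∧
      f ≠ 0 ∧ f ≠ 1 ∧ f ≠ 4 ∧ f ≠ 5 ∧ f ≠ c ∧ f ≠ e) := by decide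

lemma noSix (d : Fin 12 → Fin 6) (hd : ∀ i j, gsq i j → d i ≠ d j) : False := by
  have hinj : Function.Injective (fun i => d (gidx i)) := by
    intro i j hij
    by_contra hne
    refine hd (gidx i) (gidx j) ?_ hij
    fin_cases i <;> fin_cases j <;> first | (exact absurd rfl hne) | decide
  have hbij := Finite.injective_iff_bijective.mp hinj
  set eqv := Equiv.ofBijective _ hbij with heqv
  set σ := eqv.symm with hσ
  set d' := fun k => σ (d k) with hd'def
  have hd' : ∀ i j, gsq i j → d' i ≠ d' j := fun i j hij h =>
    hd i j hij (σ.injective h)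
  have hfix : ∀ i : Fin 6, d' (gidx i) = i := fun i => eqv.symm_apply_apply i
  have e0 : d' 0 = 0 := hfix 0
  have e1 : d' 1 = 1 := hfix 1
  have e3 : d' 3 = 3 := hfix 3
  have e4 : d' 4 = 4 := hfix 4
  have e8 : d' 8 = 5 := hfix 5
  exact final (d' 5) (d' 6) (d' 7) (d' 9) (d' 11)
    ⟨e1 ▸ hd' 5 1 (by decide), e3 ▸ hd' 5 3 (by decide),
     e4 ▸ hd' 5 4 (by decide), e8 ▸ hd' 5 8 (by decide),
     e1 ▸ hd' 6 1 (by decide), e3 ▸ hd' 6 3 (by decide),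
     e4 ▸ hd' 6 4 (by decide), e8 ▸ hd' 6 8 (by decide),
     hd' 6 5 (by decide),
     e1 ▸ hd' 7 1 (by decide), e4 ▸ hd' 7 4 (by decide),
     e8 ▸ hd' 7 8 (by decide), hd' 7 5 (by decide), hd' 7 6 (by decide),
     e0 ▸ hd' 9 0 (by decide), e1 ▸ hd' 9 1 (by decide),
     e4 ▸ hd' 9 4 (by decide), e8 ▸ hd' 9 8 (by decide), hd' 9 7 (by decide),
     e0 ▸ hd' 11 0 (by decide), e1 ▸ hd' 11 1 (by decide),
     e4 ▸ hd' 11 4 (by decide), e8 ▸ hd' 11 8 (by decide),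
     hd' 11 7 (by decide), hd' 11 9 (by decide)⟩

lemma notColorable6 {n : ℕ} (hn : 18 ≤ n) : ¬ (myG n).square.Colorable 6 := by
  rintro ⟨c⟩
  apply noSix (fun i => c ⟨i.val, by omega⟩)
  rintro i j ⟨hne, hsq⟩
  apply c.valid
  have hvne : (⟨i.val, by omega⟩ : Fin n) ≠ ⟨j.val, by omega⟩ := by
    intro h
    exact hne (Fin.ext (congrArg (fun x : Fin n => x.val) h))
  change _ ∧ _
  refine ⟨hvne, ?_⟩
  rcases hsq with h | ⟨w, h1, h2⟩
  · exact Or.inl ⟨hvne, Or.inl h⟩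
  · refine Or.inr ⟨⟨w.val, by omega⟩, ⟨?_, Or.inl h1⟩, ⟨?_, Or.inl h2⟩⟩
    · intro hh; exact ucNe h1 (congrArg (fun x : Fin n => x.val) hh)
    · intro hh; exact ucNe h2 (congrArg (fun x : Fin n => x.val) hh)

lemma chrom7 {n : ℕ} (hn3 : n % 3 = 0) (hn : 18 ≤ n) :
    (myG n).square.chromaticNumber = 7 := by
  refine le_antisymm ((colorable7 hn3 hn).chromaticNumber_le) ?_
  by_contra hlt
  push_neg at hlt
  have h6 : (myG n).square.chromaticNumber ≤ (6 : ℕ) := by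
    exact Order.le_of_lt_add_one (by exact_mod_cast hlt)
  exact notColorable6 hn (SimpleGraph.chromaticNumber_le_iff_colorable.mp h6)






lemma outerpl {n : ℕ} : (myG n).IsOuterplanar := by
  refine ⟨Fin.val, Fin.val_injective, ?_⟩
  rintro a b c d hab hcd ⟨h1, h2, h3⟩
  have sab := hab.2
  have scd := hcd.2
  have hd := d.isLt
  unfold st' uc' ch' at sab scd
  omega

lemma ncard_le5 {s : Set ℕ} {a b c d e : ℕ} (h : s ⊆ {a, b, c, d, e}) :
    s.ncard ≤ 5 := by
  refine le_trans (Set.ncard_le_ncard h (Set.toFinite _)) ?_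
  calc ({a,b,c,d,e} : Set ℕ).ncard ≤ ({b,c,d,e} : Set ℕ).ncard + 1 :=
        Set.ncard_insert_le _ _
    _ ≤ (({c,d,e} : Set ℕ).ncard + 1) + 1 := by
        exact Nat.add_le_add_right (Set.ncard_insert_le _ _) 1
    _ ≤ ((({d,e} : Set ℕ).ncard + 1) + 1) + 1 := by
        exact Nat.add_le_add_right (Nat.add_le_add_right (Set.ncard_insert_le _ _) 1) 1
    _ ≤ (((({e} : Set ℕ).ncard + 1) + 1) + 1) + 1 := by
        have := Set.ncard_insert_le d ({e} : Set ℕ)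
        omega
    _ ≤ 5 := by rw [Set.ncard_singleton]

lemma deg_eq_image {n : ℕ} (v : Fin n) :
    (myG n).deg v = (Fin.val '' ((myG n).neighborSet v)).ncard :=
  (Set.ncard_image_of_injective _ Fin.val_injective).symm

lemma deg_le5 {n : ℕ} (hn : 18 ≤ n) (v : Fin n) : (myG n).deg v ≤ 5 := by
  rw [deg_eq_image]
  have hv := v.isLt
  have hsub : ∀ (T : Set ℕ), (∀ u : Fin n, (myG n).Adj v u → (u : ℕ) ∈ T) →
      Fin.val '' ((myG n).neighborSet v) ⊆ T := by
    rintro T hT x ⟨u, hu, rfl⟩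
    exact hT u hu
  rcases lt_or_ge v.val 12 with h12 | h12
  · rcases (show v.val = 0 ∨ v.val = 1 ∨ v.val = 2 ∨ v.val = 3 ∨ v.val = 4 ∨
        v.val = 5 ∨ v.val = 6 ∨ v.val = 7 ∨ v.val = 8 ∨ v.val = 9 ∨ v.val = 10 ∨
        v.val = 11 by omega) with h|h|h|h|h|h|h|h|h|h|h|h
    · refine ncard_le5 (a := 1) (b := 11) (c := n-1) (d := n-1) (e := n-1)
        (hsub _ ?_)
      intro u hu
      have hs := hu.2
      unfold st' uc' ch' at hs
      simp only [Set.mem_insert_iff, Set.mem_singleton_iff]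
      omega
    · refine ncard_le5 (a := 0) (b := 2) (c := 3) (d := 4) (e := 8) (hsub _ ?_)
      intro u hu
      have hs := hu.2
      unfold st' uc' ch' at hs
      simp only [Set.mem_insert_iff, Set.mem_singleton_iff]
      omega
    · refine ncard_le5 (a := 1) (b := 3) (c := 3) (d := 3) (e := 3) (hsub _ ?_)
      intro u hu
      have hs := hu.2
      unfold st' uc' ch' at hs
      simp only [Set.mem_insert_iff, Set.mem_singleton_iff]
      omega
    · refine ncard_le5 (a := 2) (b := 4) (c := 1) (d := 1) (e := 1) (hsub _ ?_)
      intro u hu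
      have hs := hu.2
      unfold st' uc' ch' at hs
      simp only [Set.mem_insert_iff, Set.mem_singleton_iff]
      omega
    · refine ncard_le5 (a := 3) (b := 5) (c := 1) (d := 6) (e := 8) (hsub _ ?_)
      intro u hu
      have hs := hu.2
      unfold st' uc' ch' at hs
      simp only [Set.mem_insert_iff, Set.mem_singleton_iff]
      omega
    · refine ncard_le5 (a := 4) (b := 6) (c := 6) (d := 6) (e := 6) (hsub _ ?_)
      intro u hu
      have hs := hu.2
      unfold st' uc' ch' at hs
      simp only [Set.mem_insert_iff, Set.mem_singleton_iff]
      omega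
    · refine ncard_le5 (a := 5) (b := 7) (c := 4) (d := 4) (e := 4) (hsub _ ?_)
      intro u hu
      have hs := hu.2
      unfold st' uc' ch' at hs
      simp only [Set.mem_insert_iff, Set.mem_singleton_iff]
      omega
    · refine ncard_le5 (a := 6) (b := 8) (c := 8) (d := 8) (e := 8) (hsub _ ?_)
      intro u hu
      have hs := hu.2
      unfold st' uc' ch' at hs
      simp only [Set.mem_insert_iff, Set.mem_singleton_iff]
      omega
    · refine ncard_le5 (a := 7) (b := 9) (c := 1) (d := 4) (e := 11) (hsub _ ?_)
      intro u hu
      have hs := hu.2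
      unfold st' uc' ch' at hs
      simp only [Set.mem_insert_iff, Set.mem_singleton_iff]
      omega
    · refine ncard_le5 (a := 8) (b := 10) (c := 11) (d := 11) (e := 11) (hsub _ ?_)
      intro u hu
      have hs := hu.2
      unfold st' uc' ch' at hs
      simp only [Set.mem_insert_iff, Set.mem_singleton_iff]
      omega
    · refine ncard_le5 (a := 9) (b := 11) (c := 11) (d := 11) (e := 11) (hsub _ ?_)
      intro u hu
      have hs := hu.2
      unfold st' uc' ch' at hs
      simp only [Set.mem_insert_iff, Set.mem_singleton_iff]
      omega
    · refine ncard_le5 (a := 10) (b := 12) (c := 0) (d := 8) (e := 9) (hsub _ ?_)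
      intro u hu
      have hs := hu.2
      unfold st' uc' ch' at hs
      simp only [Set.mem_insert_iff, Set.mem_singleton_iff]
      omega
  · rcases lt_or_ge v.val (n-1) with h1 | h1
    · refine ncard_le5 (a := v.val - 1) (b := v.val + 1) (c := v.val + 1)
        (d := v.val + 1) (e := v.val + 1) (hsub _ ?_)
      intro u hu
      have hs := hu.2
      unfold st' uc' ch' at hs
      simp only [Set.mem_insert_iff, Set.mem_singleton_iff]
      omega
    · refine ncard_le5 (a := n-2) (b := 0) (c := 0) (d := 0) (e := 0) (hsub _ ?_)
      intro u hu
      have hs := hu.2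
      unfold st' uc' ch' at hs
      simp only [Set.mem_insert_iff, Set.mem_singleton_iff]
      omega

lemma deg_one {n : ℕ} (hn : 18 ≤ n) : (myG n).deg ⟨1, by omega⟩ = 5 := by
  rw [deg_eq_image]
  have himg : Fin.val '' ((myG n).neighborSet ⟨1, by omega⟩) =
      (({0, 2, 3, 4, 8} : Finset ℕ) : Set ℕ) := by
    apply Set.eq_of_subset_of_subset
    · rintro x ⟨u, hu, rfl⟩
      have hs := hu.2
      unfold st' uc' ch' at hs
      simp only [Fin.val_mk] at hs
      simp only [Finset.coe_insert, Set.mem_insert_iff, Finset.coe_singleton,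
        Set.mem_singleton_iff]
      omega
    · intro x hx
      simp only [Finset.coe_insert, Set.mem_insert_iff, Finset.coe_singleton,
        Set.mem_singleton_iff] at hx
      rcases hx with h|h|h|h|h <;> subst h
      · exact ⟨⟨0, by omega⟩, ⟨Fin.ne_of_val_ne (by norm_num),
          Or.inl (by decide : uc' 1 0)⟩, rfl⟩
      · exact ⟨⟨2, by omega⟩, ⟨Fin.ne_of_val_ne (by norm_num),
          Or.inl (by decide : uc' 1 2)⟩, rfl⟩
      · exact ⟨⟨3, by omega⟩, ⟨Fin.ne_of_val_ne (by norm_num),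
          Or.inl (by decide : uc' 1 3)⟩, rfl⟩
      · exact ⟨⟨4, by omega⟩, ⟨Fin.ne_of_val_ne (by norm_num),
          Or.inl (by decide : uc' 1 4)⟩, rfl⟩
      · exact ⟨⟨8, by omega⟩, ⟨Fin.ne_of_val_ne (by norm_num),
          Or.inl (by decide : uc' 1 8)⟩, rfl⟩
  rw [himg, Set.ncard_coe_finset]
  decide

lemma maxdeg5 {n : ℕ} (hn : 18 ≤ n) : (myG n).maxDeg = 5 := by
  unfold SimpleGraph.maxDeg
  apply le_antisymm
  · exact Finset.sup_le fun v _ => deg_le5 hn v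
  · have h := Finset.le_sup (f := fun v => (myG n).deg v)
      (Finset.mem_univ (⟨1, by omega⟩ : Fin n))
    exact le_of_eq_of_le (deg_one hn).symm h




lemma adj_step {n : ℕ} {x : ℕ} (hx : x + 1 < n) :
    (myG n).Adj ⟨x, by omega⟩ ⟨x + 1, hx⟩ :=
  ⟨Fin.ne_of_val_ne (show x ≠ x + 1 by omega), Or.inl (Or.inl rfl)⟩

lemma adj_wrap {n : ℕ} (hn : 2 ≤ n) :
    (myG n).Adj ⟨0, by omega⟩ ⟨n - 1, by omega⟩ :=
  ⟨Fin.ne_of_val_ne (show (0:ℕ) ≠ n - 1 by omega), Or.inr (Or.inl ⟨rfl, rfl⟩)⟩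

lemma reach0 {n : ℕ} : ∀ (k : ℕ) (hk : k < n),
    (myG n).Reachable ⟨0, by omega⟩ ⟨k, hk⟩ := by
  intro k
  induction k with
  | zero => intro hk; rfl
  | succ m ih =>
    intro hk
    exact (ih (by omega)).trans (adj_step hk).reachable

lemma myG_connected {n : ℕ} (hn : 18 ≤ n) : (myG n).Connected := by
  rw [SimpleGraph.connected_iff]
  refine ⟨fun u v => ?_, ⟨⟨0, by omega⟩⟩⟩
  have hu := reach0 u.val u.isLt
  have hv := reach0 v.val v.isLt
  exact hu.symm.trans hv

section delete

variable {n : ℕ} (v : Fin n)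

abbrev Hd (n : ℕ) (v : Fin n) := (myG n).induce {u | u ≠ v}

lemma mkH {x : ℕ} (hx : x < n) (hxv : x ≠ v.val) :
    (⟨x, hx⟩ : Fin n) ∈ {u : Fin n | u ≠ v} := by
  intro h
  exact hxv (congrArg Fin.val h)

lemma adjH {a b : Fin n} (ha : a ∈ {u : Fin n | u ≠ v}) (hb : b ∈ {u : Fin n | u ≠ v})
    (h : (myG n).Adj a b) : (Hd n v).Adj ⟨a, ha⟩ ⟨b, hb⟩ := h

lemma Rup : ∀ (d x : ℕ) (hx : x < n) (hd : x + d < n) (hv : v.val < x),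
    (Hd n v).Reachable ⟨⟨x, hx⟩, mkH v hx (by omega)⟩
      ⟨⟨x + d, hd⟩, mkH v hd (by omega)⟩ := by
  intro d
  induction d with
  | zero => intro x hx hd hv; rfl
  | succ m ih =>
    intro x hx hd hv
    refine (ih x hx (by omega) hv).trans ?_
    exact (adjH v _ _ (adj_step (show x + m + 1 < n by omega))).reachable

lemma Rup' (x y : ℕ) (hy : y < n) (hvx : v.val < x) (hxy : x ≤ y) :
    (Hd n v).Reachable ⟨⟨x, by omega⟩, mkH v (by omega) (by omega)⟩
      ⟨⟨y, hy⟩, mkH v hy (by omega)⟩ := by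
  obtain ⟨d, rfl⟩ : ∃ d, y = x + d := ⟨y - x, by omega⟩
  exact Rup v d x (by omega) hy hvx

lemma Rdown : ∀ (d : ℕ) (hd : d < n) (hv : d < v.val),
    (Hd n v).Reachable ⟨⟨0, by omega⟩, mkH v (by omega) (by omega)⟩
      ⟨⟨d, hd⟩, mkH v hd (by omega)⟩ := by
  intro d
  induction d with
  | zero => intro hd hv; rfl
  | succ m ih =>
    intro hd hv
    refine (ih (by omega) (by omega)).trans ?_
    exact (adjH v _ _ (adj_step (show m + 1 < n by omega))).reachable

lemma reach_any (hn : 18 ≤ n) (x y : ↥{u : Fin n | u ≠ v}) :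
    (Hd n v).Reachable x y := by
  obtain ⟨⟨a, han⟩, hamem⟩ := x
  obtain ⟨⟨b, hbn⟩, hbmem⟩ := y
  have hav : a ≠ v.val := fun h => hamem (Fin.ext h)
  have hbv : b ≠ v.val := fun h => hbmem (Fin.ext h)
  have hvn := v.isLt
  rcases lt_or_gt_of_ne hav with ha1 | ha1 <;> rcases lt_or_gt_of_ne hbv with hb1 | hb1
  · exact ((Rdown v a han ha1).symm.trans (Rdown v b hbn hb1))
  · have wrap : (Hd n v).Reachable ⟨⟨0, by omega⟩, mkH v (by omega) (by omega)⟩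
        ⟨⟨n-1, by omega⟩, mkH v (by omega) (by omega)⟩ :=
      (adjH v _ _ (adj_wrap (by omega))).reachable
    exact ((Rdown v a han ha1).symm.trans
      (wrap.trans (Rup' v b (n-1) (by omega) hb1 (by omega)).symm))
  · have wrap : (Hd n v).Reachable ⟨⟨0, by omega⟩, mkH v (by omega) (by omega)⟩
        ⟨⟨n-1, by omega⟩, mkH v (by omega) (by omega)⟩ :=
      (adjH v _ _ (adj_wrap (by omega))).reachable
    exact ((Rup' v a (n-1) (by omega) ha1 (by omega)).trans
      (wrap.symm.trans (Rdown v b hbn hb1)))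
  · exact ((Rup' v a (n-1) (by omega) ha1 (by omega)).trans
      (Rup' v b (n-1) (by omega) hb1 (by omega)).symm)

lemma Hd_connected (hn : 18 ≤ n) : (Hd n v).Connected := by
  have hvn := v.isLt
  rw [SimpleGraph.connected_iff]
  refine ⟨fun x y => reach_any v hn x y, ?_⟩
  rcases Nat.eq_zero_or_pos v.val with h | h
  · exact ⟨⟨⟨1, by omega⟩, mkH v (by omega) (by omega)⟩⟩
  · exact ⟨⟨⟨0, by omega⟩, mkH v (by omega) (by omega)⟩⟩

end delete

lemma myG_biconnected {n : ℕ} (hn : 18 ≤ n) : (myG n).Biconnected := by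
  refine ⟨by simpa using (by omega : 3 ≤ n), myG_connected hn, fun v => Hd_connected v hn⟩

/-- For every `N` there are `n ≥ N` and a finite simple graph `G`
on `n` vertices that is biconnected and outerplanar, has maximum degree 5, and
satisfies `χ(G²) = 7`. -/
theorem stmt16 (N : ℕ) :
    ∃ n : ℕ, N ≤ n ∧ ∃ G : SimpleGraph (Fin n),
      G.Biconnected ∧ G.IsOuterplanar ∧ G.maxDeg = 5 ∧
      G.square.chromaticNumber = 7 := by
  exact ⟨3*N+18, by omega, myG (3*N+18), myG_biconnected (by omega), outerpl,
    maxdeg5 (by omega), chrom7 (by omega) (by omega)⟩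
end
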